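/- Let η : ℝ → ℝ be defined for 0 < r < π/2 by η(r) = c₁ · (1 − cos(r)^(2/3))^(1/2) · (cos(r)^(2/3) + cos(r)^(4/3) + 1)^(−1/4) · exp(−(√3/2) · arctan((2·cos(r)^(2/3) + 1)/√3)), where c₁ = 3^(3/4) · e^(π/(2√3)). Then η(r) → 3^(3/4) · e^(π/(4√3)) as r → (π/2)⁻, and the derivative η' is integrable on the interval (0, π/2). -/

import Mathlib

open Real Set Filter MeasureTheory

/-- The constant `c₁ = 3^(3/4) e^(π/(2√3))` of Lemma 2.4 of Gilkey–Park. -/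
noncomputable def c₁ : ℝ := (3 : ℝ) ^ ((3 : ℝ) / 4) * Real.exp (Real.pi / (2 * Real.sqrt 3))

/-- The reparametrized radial distance function `η` of Lemma 2.4 of Gilkey–Park on `CP²`. -/
noncomputable def η (r : ℝ) : ℝ :=
  c₁ * (1 - Real.cos r ^ ((2 : ℝ) / 3)) ^ ((1 : ℝ) / 2)
    * (Real.cos r ^ ((2 : ℝ) / 3) + Real.cos r ^ ((4 : ℝ) / 3) + 1) ^ (-(1 : ℝ) / 4)
    * Real.exp (-(Real.sqrt 3 / 2)
        * Real.arctan ((2 * Real.cos r ^ ((2 : ℝ) / 3) + 1) / Real.sqrt 3))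

lemma c₁_nonneg : 0 ≤ c₁ := by unfold c₁; positivity

lemma eta_contAt {r : ℝ}
    (hb : Real.cos r ^ ((2:ℝ)/3) + Real.cos r ^ ((4:ℝ)/3) + 1 ≠ 0) :
    ContinuousAt η r := by
  have h23 : Continuous (fun s : ℝ => Real.cos s ^ ((2:ℝ)/3)) :=
    (Real.continuous_rpow_const (by norm_num)).comp Real.continuous_cos
  have h43 : Continuous (fun s : ℝ => Real.cos s ^ ((4:ℝ)/3)) :=
    (Real.continuous_rpow_const (by norm_num)).comp Real.continuous_cos
  have h1 : Continuous (fun s : ℝ => (1 - Real.cos s ^ ((2:ℝ)/3)) ^ ((1:ℝ)/2)) :=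
    (Real.continuous_rpow_const (by norm_num)).comp (continuous_const.sub h23)
  have h2 : ContinuousAt
      (fun s : ℝ => (Real.cos s ^ ((2:ℝ)/3) + Real.cos s ^ ((4:ℝ)/3) + 1) ^ (-(1:ℝ)/4)) r :=
    ContinuousAt.rpow_const ((h23.add h43).add continuous_const).continuousAt (Or.inl hb)
  have h3 : Continuous (fun s : ℝ =>
      Real.exp (-(Real.sqrt 3 / 2)
        * Real.arctan ((2 * Real.cos s ^ ((2:ℝ)/3) + 1) / Real.sqrt 3))) :=
    Real.continuous_exp.comp (continuous_const.mul (Real.continuous_arctan.comp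
      (((continuous_const.mul h23).add continuous_const).div_const _)))
  unfold η
  exact ((continuousAt_const.mul h1.continuousAt).mul h2).mul h3.continuousAt

set_option maxHeartbeats 1000000 in
lemma eta_mono : MonotoneOn η (Set.Icc 0 (Real.pi/2)) := by
  intro x hx y hy hxy
  obtain ⟨hx0, hx2⟩ := hx; obtain ⟨hy0, hy2⟩ := hy
  have hpi := Real.pi_pos
  have hcy : 0 ≤ Real.cos y := Real.cos_nonneg_of_mem_Icc ⟨by linarith, hy2⟩
  have hca : Real.cos y ≤ Real.cos x :=
    Real.cos_le_cos_of_nonneg_of_le_pi hx0 (by linarith) hxy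
  have hcx1 : Real.cos x ≤ 1 := Real.cos_le_one x
  have hcx : 0 ≤ Real.cos x := le_trans hcy hca
  set a := Real.cos x
  set b := Real.cos y
  have hA2 : b ^ ((2:ℝ)/3) ≤ a ^ ((2:ℝ)/3) := Real.rpow_le_rpow hcy hca (by norm_num)
  have hA4 : b ^ ((4:ℝ)/3) ≤ a ^ ((4:ℝ)/3) := Real.rpow_le_rpow hcy hca (by norm_num)
  have ha1 : a ^ ((2:ℝ)/3) ≤ 1 := Real.rpow_le_one hcx hcx1 (by norm_num)
  have hb1 : b ^ ((2:ℝ)/3) ≤ 1 := le_trans hA2 ha1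
  have hb0 : 0 ≤ b ^ ((2:ℝ)/3) := Real.rpow_nonneg hcy _
  have hb40 : 0 ≤ b ^ ((4:ℝ)/3) := Real.rpow_nonneg hcy _
  have ha0 : 0 ≤ a ^ ((2:ℝ)/3) := Real.rpow_nonneg hcx _
  have ha40 : 0 ≤ a ^ ((4:ℝ)/3) := Real.rpow_nonneg hcx _
  have hbpos : (0:ℝ) < b ^ ((2:ℝ)/3) + b ^ ((4:ℝ)/3) + 1 := by linarith
  have h1 : (1 - a ^ ((2:ℝ)/3)) ^ ((1:ℝ)/2) ≤ (1 - b ^ ((2:ℝ)/3)) ^ ((1:ℝ)/2) :=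
    Real.rpow_le_rpow (by linarith) (by linarith) (by norm_num)
  have h1na : 0 ≤ (1 - a ^ ((2:ℝ)/3)) ^ ((1:ℝ)/2) := Real.rpow_nonneg (by linarith) _
  have h1nb : 0 ≤ (1 - b ^ ((2:ℝ)/3)) ^ ((1:ℝ)/2) := Real.rpow_nonneg (by linarith) _
  have h2 : (a ^ ((2:ℝ)/3) + a ^ ((4:ℝ)/3) + 1) ^ (-(1:ℝ)/4)
      ≤ (b ^ ((2:ℝ)/3) + b ^ ((4:ℝ)/3) + 1) ^ (-(1:ℝ)/4) :=
    Real.rpow_le_rpow_of_nonpos hbpos (by linarith) (by norm_num)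
  have h2na : 0 ≤ (a ^ ((2:ℝ)/3) + a ^ ((4:ℝ)/3) + 1) ^ (-(1:ℝ)/4) :=
    Real.rpow_nonneg (by linarith) _
  have h2nb : 0 ≤ (b ^ ((2:ℝ)/3) + b ^ ((4:ℝ)/3) + 1) ^ (-(1:ℝ)/4) :=
    Real.rpow_nonneg (by linarith) _
  have hs3 : (0:ℝ) < Real.sqrt 3 := Real.sqrt_pos.2 (by norm_num)
  have harc : Real.arctan ((2 * b ^ ((2:ℝ)/3) + 1) / Real.sqrt 3)
      ≤ Real.arctan ((2 * a ^ ((2:ℝ)/3) + 1) / Real.sqrt 3) :=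
    Real.arctan_strictMono.monotone (by gcongr)
  have h3 : Real.exp (-(Real.sqrt 3 / 2) * Real.arctan ((2 * a ^ ((2:ℝ)/3) + 1) / Real.sqrt 3))
      ≤ Real.exp (-(Real.sqrt 3 / 2) * Real.arctan ((2 * b ^ ((2:ℝ)/3) + 1) / Real.sqrt 3)) := by
    apply Real.exp_le_exp.2
    apply mul_le_mul_of_nonpos_left harc
    nlinarith
  have h3na : 0 ≤ Real.exp (-(Real.sqrt 3 / 2)
      * Real.arctan ((2 * a ^ ((2:ℝ)/3) + 1) / Real.sqrt 3)) := (Real.exp_pos _).le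
  show c₁ * (1 - a ^ ((2:ℝ)/3)) ^ ((1:ℝ)/2) * (a ^ ((2:ℝ)/3) + a ^ ((4:ℝ)/3) + 1) ^ (-(1:ℝ)/4)
      * Real.exp (-(Real.sqrt 3 / 2) * Real.arctan ((2 * a ^ ((2:ℝ)/3) + 1) / Real.sqrt 3))
    ≤ c₁ * (1 - b ^ ((2:ℝ)/3)) ^ ((1:ℝ)/2) * (b ^ ((2:ℝ)/3) + b ^ ((4:ℝ)/3) + 1) ^ (-(1:ℝ)/4)
      * Real.exp (-(Real.sqrt 3 / 2) * Real.arctan ((2 * b ^ ((2:ℝ)/3) + 1) / Real.sqrt 3))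
  have hc₁ := c₁_nonneg
  apply mul_le_mul _ h3 h3na (mul_nonneg (mul_nonneg hc₁ h1nb) h2nb)
  apply mul_le_mul _ h2 h2na (mul_nonneg hc₁ h1nb)
  exact mul_le_mul_of_nonneg_left h1 hc₁

lemma eta_diffAt {x : ℝ} (hx : x ∈ Set.Ioo 0 (Real.pi/2)) : DifferentiableAt ℝ η x := by
  have hpi := Real.pi_pos
  have hc : 0 < Real.cos x := Real.cos_pos_of_mem_Ioo ⟨by linarith [hx.1], hx.2⟩
  have hc1 : Real.cos x < 1 := by
    have h := Real.cos_lt_cos_of_nonneg_of_le_pi (le_refl 0) (by linarith [hx.2]) hx.1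
    rwa [Real.cos_zero] at h
  have hu : DifferentiableAt ℝ (fun r => Real.cos r ^ ((2:ℝ)/3)) x :=
    (Real.differentiable_cos x).rpow_const (Or.inl hc.ne')
  have hu4 : DifferentiableAt ℝ (fun r => Real.cos r ^ ((4:ℝ)/3)) x :=
    (Real.differentiable_cos x).rpow_const (Or.inl hc.ne')
  have hlt1 : Real.cos x ^ ((2:ℝ)/3) < 1 := Real.rpow_lt_one hc.le hc1 (by norm_num)
  have h1 : DifferentiableAt ℝ (fun r => (1 - Real.cos r ^ ((2:ℝ)/3)) ^ ((1:ℝ)/2)) x :=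
    ((differentiableAt_const (1:ℝ)).sub hu).rpow_const (Or.inl (by simp; linarith))
  have hb2 : 0 ≤ Real.cos x ^ ((2:ℝ)/3) := Real.rpow_nonneg hc.le _
  have hb4 : 0 ≤ Real.cos x ^ ((4:ℝ)/3) := Real.rpow_nonneg hc.le _
  have h2 : DifferentiableAt ℝ
      (fun r => (Real.cos r ^ ((2:ℝ)/3) + Real.cos r ^ ((4:ℝ)/3) + 1) ^ (-(1:ℝ)/4)) x :=
    ((hu.add hu4).add (differentiableAt_const 1)).rpow_const (Or.inl (by show Real.cos x ^ ((2:ℝ)/3) + Real.cos x ^ ((4:ℝ)/3) + 1 ≠ 0; exact ne_of_gt (by linarith)))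
  have h3 : DifferentiableAt ℝ (fun r =>
      Real.exp (-(Real.sqrt 3 / 2)
        * Real.arctan ((2 * Real.cos r ^ ((2:ℝ)/3) + 1) / Real.sqrt 3))) x := by
    apply DifferentiableAt.exp
    apply DifferentiableAt.const_mul
    exact (Real.differentiable_arctan _).comp x
      (((hu.const_mul 2).add (differentiableAt_const 1)).div_const _)
  unfold η
  exact (((h1.const_mul c₁).mul h2).mul h3)

theorem stmt_11 :
    Filter.Tendsto η (nhdsWithin (Real.pi / 2) (Set.Iio (Real.pi / 2)))
      (nhds ((3 : ℝ) ^ ((3 : ℝ) / 4) * Real.exp (Real.pi / (4 * Real.sqrt 3)))) ∧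
    MeasureTheory.IntegrableOn (deriv η) (Set.Ioo 0 (Real.pi / 2)) := by
  have hpi := Real.pi_pos
  constructor
  · have hb : Real.cos (Real.pi/2) ^ ((2:ℝ)/3) + Real.cos (Real.pi/2) ^ ((4:ℝ)/3) + 1 ≠ 0 := by
      rw [Real.cos_pi_div_two, Real.zero_rpow (by norm_num), Real.zero_rpow (by norm_num)]
      norm_num
    have hval : η (Real.pi/2)
        = (3 : ℝ) ^ ((3 : ℝ) / 4) * Real.exp (Real.pi / (4 * Real.sqrt 3)) := by
      unfold η c₁
      rw [Real.cos_pi_div_two, Real.zero_rpow (by norm_num : ((2:ℝ)/3) ≠ 0),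
        Real.zero_rpow (by norm_num : ((4:ℝ)/3) ≠ 0)]
      have harc : Real.arctan ((2 * (0:ℝ) + 1) / Real.sqrt 3) = Real.pi/6 := by
        rw [show ((2 * (0:ℝ) + 1) / Real.sqrt 3) = 1 / Real.sqrt 3 by ring,
          ← Real.tan_pi_div_six, Real.arctan_tan (by linarith) (by linarith)]
      rw [harc]
      rw [show (1:ℝ) - 0 = 1 by ring, show (0:ℝ) + 0 + 1 = 1 by ring,
        Real.one_rpow, Real.one_rpow, mul_one, mul_one]
      rw [mul_assoc, ← Real.exp_add]
      congr 1
      congr 1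
      have hs : Real.sqrt 3 * Real.sqrt 3 = 3 := Real.mul_self_sqrt (by norm_num)
      have hs0 : Real.sqrt 3 ≠ 0 := by positivity
      field_simp
      linear_combination (-4) * hs
    rw [← hval]
    exact (eta_contAt hb).continuousWithinAt.tendsto
  · have hcont : ContinuousOn η (Set.Icc 0 (Real.pi/2)) := by
      intro r hr
      have hcr : 0 ≤ Real.cos r := Real.cos_nonneg_of_mem_Icc ⟨by linarith [hr.1], hr.2⟩
      have h2 := Real.rpow_nonneg hcr ((2:ℝ)/3)
      have h4 := Real.rpow_nonneg hcr ((4:ℝ)/3)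
      exact (eta_contAt (by positivity)).continuousWithinAt
    have hderiv : ∀ x ∈ Set.Ioo 0 (Real.pi/2), HasDerivAt η (deriv η x) x :=
      fun x hx => (eta_diffAt hx).hasDerivAt
    have hpos : ∀ x ∈ Set.Ioo 0 (Real.pi/2), 0 ≤ deriv η x := by
      intro x hx
      have hT : Filter.Tendsto (slope η x) (nhdsWithin x (Set.Ioi x)) (nhds (deriv η x)) :=
        (hasDerivAt_iff_tendsto_slope.1 (hderiv x hx)).mono_left
          (nhdsWithin_mono _ (fun y hy => Set.mem_compl_singleton_iff.2 (ne_of_gt hy)))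
      refine ge_of_tendsto hT ?_
      filter_upwards [self_mem_nhdsWithin,
        mem_nhdsWithin_of_mem_nhds (isOpen_Iio.mem_nhds hx.2)] with y hy1 hy2
      rw [slope_def_field]
      apply div_nonneg _ (by simp only [Set.mem_Ioi] at hy1; linarith)
      simp only [Set.mem_Ioi] at hy1
      simp only [Set.mem_Iio] at hy2
      have := eta_mono ⟨hx.1.le, hx.2.le⟩ ⟨(lt_trans hx.1 hy1).le, hy2.le⟩ hy1.le
      linarith
    have h := intervalIntegral.integrableOn_deriv_of_nonneg hcont hderiv hpos
    exact h.mono_set Set.Ioo_subset_Ioc_self
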